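/- Over a two-letter alphabet, two words define the same mapping on all rows under the (bumped-letter-discarding) row-insertion action if and only if they are plactic (Knuth) congruent. -/

import Mathlib

/-- Schensted row insertion of a letter into a row, with the bumped letter
discarded: append `b` if every letter is `≤ b`, otherwise replace the
leftmost letter strictly greater than `b` by `b`. -/
def rowIns {A : Type*} [LinearOrder A] : List A → A → List A
  | [], b => [b]
  | a :: r, b => if a ≤ b then a :: rowIns r b else b :: r

/-- Action of a word on a row, composing letter actions left to right. -/
def rowActW {A : Type*} [LinearOrder A] (r : List A) (w : List A) : List A :=
  w.foldl rowIns r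

/-- One-step Knuth (plactic) relation with contexts:
`bac ∼ bca` for `a < b ≤ c` and `acb ∼ cab` for `a ≤ b < c`. -/
inductive KnuthStep {A : Type*} [LinearOrder A] : List A → List A → Prop
  | k1 (u v : List A) (a b c : A) (h1 : a < b) (h2 : b ≤ c) :
      KnuthStep (u ++ [b, a, c] ++ v) (u ++ [b, c, a] ++ v)
  | k2 (u v : List A) (a b c : A) (h1 : a ≤ b) (h2 : b < c) :
      KnuthStep (u ++ [a, c, b] ++ v) (u ++ [c, a, b] ++ v)

/-- The plactic congruence: equivalence closure of the Knuth steps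
(which are already closed under contexts). -/
def Plactic {A : Type*} [LinearOrder A] : List A → List A → Prop :=
  Relation.EqvGen KnuthStep

open List Relation

namespace TwoGram

lemma ptrans {A : Type*} [LinearOrder A] {a b c : List A}
    (h1 : Plactic a b) (h2 : Plactic b c) : Plactic a c :=
  Relation.EqvGen.trans a b c h1 h2

lemma rowActW_nil {A : Type*} [LinearOrder A] (r : List A) : rowActW r [] = r := rfl

lemma rowActW_cons {A : Type*} [LinearOrder A] (r : List A) (x : A) (w : List A) :
    rowActW r (x :: w) = rowActW (rowIns r x) w := rfl

lemma rowActW_append {A : Type*} [LinearOrder A] (r w₁ w₂ : List A) :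
    rowActW r (w₁ ++ w₂) = rowActW (rowActW r w₁) w₂ :=
  List.foldl_append

/-- canonical sorted row over two letters -/
def form (m t : ℕ) : List (Fin 2) := replicate m 0 ++ replicate t 1

/-- normal form of a word -/
def NF (k i j : ℕ) : List (Fin 2) :=
  replicate k 1 ++ (replicate i 0 ++ replicate j 1)

lemma rowIns_ones_one (n : ℕ) :
    rowIns (replicate n (1 : Fin 2)) 1 = replicate (n + 1) 1 := by
  induction n with
  | zero => rfl
  | succ n ih =>
    rw [replicate_succ, rowIns, if_pos le_rfl, ih]
    rfl

lemma rowIns_form_one (m t : ℕ) :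
    rowIns (form m t) 1 = form m (t + 1) := by
  induction m with
  | zero => simpa [form] using rowIns_ones_one t
  | succ m ih =>
    rw [form, replicate_succ, cons_append, rowIns,
      if_pos (by decide : (0 : Fin 2) ≤ 1)]
    rw [form] at ih
    rw [ih]; rfl

lemma rowIns_form_zero (m t : ℕ) :
    rowIns (form m t) 0 = form (m + 1) (t - 1) := by
  induction m with
  | zero =>
    cases t with
    | zero => rfl
    | succ t =>
      simp only [form, replicate, nil_append, rowIns,
        if_neg (by decide : ¬ (1 : Fin 2) ≤ 0)]
      rfl
  | succ m ih =>
    rw [form, replicate_succ, cons_append, rowIns, if_pos le_rfl]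
    rw [form] at ih
    rw [ih]; rfl

lemma act_ones (m t n : ℕ) :
    rowActW (form m t) (replicate n (1 : Fin 2)) = form m (t + n) := by
  induction n generalizing t with
  | zero => rfl
  | succ n ih =>
    rw [replicate_succ, rowActW_cons, rowIns_form_one, ih]
    congr 1
    omega

lemma act_zeros (m t n : ℕ) :
    rowActW (form m t) (replicate n (0 : Fin 2)) = form (m + n) (t - n) := by
  induction n generalizing m t with
  | zero => rfl
  | succ n ih =>
    rw [replicate_succ, rowActW_cons, rowIns_form_zero, ih]
    congr 1 <;> omega

lemma act_NF (m t k i j : ℕ) :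
    rowActW (form m t) (NF k i j) = form (m + i) ((t + k) - i + j) := by
  rw [NF, rowActW_append, rowActW_append, act_ones, act_zeros, act_ones]

lemma form_inj {m t m' t' : ℕ} (h : form m t = form m' t') : m = m' ∧ t = t' := by
  have h0 := congrArg (fun l => List.count (0 : Fin 2) l) h
  have h1 := congrArg (fun l => List.count (1 : Fin 2) l) h
  simp [form, List.count_append, List.count_replicate] at h0 h1
  exact ⟨h0, h1⟩

lemma fin2 : ∀ x : Fin 2, x = 0 ∨ x = 1 := by decide

lemma fin2_lt : ∀ a b : Fin 2, a < b → a = 0 ∧ b = 1 := by decide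

lemma fin2_le_one : ∀ b c : Fin 2, b ≤ c → b = 1 → c = 1 := by decide

lemma fin2_le_zero : ∀ a b : Fin 2, a ≤ b → b = 0 → a = 0 := by decide

lemma sorted_ones (t : ℕ) : Pairwise (· ≤ ·) (replicate t (1 : Fin 2)) := by
  induction t with
  | zero => exact List.Pairwise.nil
  | succ t ih =>
    rw [replicate_succ, pairwise_cons]
    exact ⟨fun b hb => by rw [eq_of_mem_replicate hb], ih⟩

lemma form_sorted (m t : ℕ) : Pairwise (· ≤ ·) (form m t) := by
  induction m with
  | zero => simpa [form] using sorted_ones t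
  | succ m ih =>
    rw [form, replicate_succ, cons_append, pairwise_cons]
    exact ⟨fun b _ => Fin.zero_le b, ih⟩

lemma sorted_form {r : List (Fin 2)} (h : Pairwise (· ≤ ·) r) :
    ∃ m t, r = form m t := by
  induction r with
  | nil => exact ⟨0, 0, rfl⟩
  | cons x r ih =>
    rw [List.pairwise_cons] at h
    obtain ⟨m, t, rfl⟩ := ih h.2
    rcases fin2 x with rfl | rfl
    · exact ⟨m + 1, t, by rw [form, form, replicate_succ, cons_append]⟩
    · refine ⟨0, t + 1, ?_⟩
      cases m with
      | succ m =>
        exfalso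
        have := h.1 0 (by simp [form, replicate_succ])
        exact absurd this (by decide)
      | zero => rw [form, form, replicate_succ]; rfl

lemma form_rowActW (m t : ℕ) (w : List (Fin 2)) :
    ∃ m' t', rowActW (form m t) w = form m' t' := by
  induction w generalizing m t with
  | nil => exact ⟨m, t, rfl⟩
  | cons x w ih =>
    rw [rowActW_cons]
    rcases fin2 x with rfl | rfl
    · rw [rowIns_form_zero]; exact ih _ _
    · rw [rowIns_form_one]; exact ih _ _

lemma act_k1 (m t : ℕ) :
    rowActW (form m t) [1, 0, 1] = rowActW (form m t) [1, 1, 0] := by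
  simp only [rowActW_cons, rowIns_form_one, rowIns_form_zero, rowActW_nil]
  congr 1

lemma act_k2 (m t : ℕ) :
    rowActW (form m t) [0, 1, 0] = rowActW (form m t) [1, 0, 0] := by
  simp only [rowActW_cons, rowIns_form_one, rowIns_form_zero, rowActW_nil]
  congr 1

lemma knuth_act {p q : List (Fin 2)} (hk : KnuthStep p q) (m t : ℕ) :
    rowActW (form m t) p = rowActW (form m t) q := by
  cases hk with
  | k1 u v a b c h1 h2 =>
    obtain ⟨ha, hb⟩ := fin2_lt a b h1
    have hc : c = 1 := fin2_le_one b c h2 hb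
    subst ha; subst hb; subst hc
    rw [rowActW_append, rowActW_append, rowActW_append, rowActW_append]
    obtain ⟨m', t', h⟩ := form_rowActW m t u
    rw [h, act_k1]
  | k2 u v a b c h1 h2 =>
    obtain ⟨hb, hc⟩ := fin2_lt b c h2
    have ha : a = 0 := fin2_le_zero a b h1 hb
    subst ha; subst hb; subst hc
    rw [rowActW_append, rowActW_append, rowActW_append, rowActW_append]
    obtain ⟨m', t', h⟩ := form_rowActW m t u
    rw [h, act_k2]

lemma plactic_act {p q : List (Fin 2)} (h : Plactic p q) :
    ∀ r : List (Fin 2), Pairwise (· ≤ ·) r → rowActW r p = rowActW r q := by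
  induction h with
  | rel a b hab =>
    intro r hr
    obtain ⟨m, t, rfl⟩ := sorted_form hr
    exact knuth_act hab m t
  | refl a => intro r _; rfl
  | symm a b _ ih => intro r hr; exact (ih r hr).symm
  | trans a b c _ _ ih1 ih2 => intro r hr; rw [ih1 r hr, ih2 r hr]

lemma knuthCtx {A : Type*} [LinearOrder A] {p q : List A} (h : KnuthStep p q)
    (w x : List A) : KnuthStep (w ++ p ++ x) (w ++ q ++ x) := by
  cases h with
  | k1 u v a b c h1 h2 =>
    have := KnuthStep.k1 (w ++ u) (v ++ x) a b c h1 h2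
    simpa [List.append_assoc] using this
  | k2 u v a b c h1 h2 =>
    have := KnuthStep.k2 (w ++ u) (v ++ x) a b c h1 h2
    simpa [List.append_assoc] using this

lemma placticCtx {A : Type*} [LinearOrder A] {p q : List A} (h : Plactic p q)
    (w x : List A) : Plactic (w ++ p ++ x) (w ++ q ++ x) := by
  induction h with
  | rel a b hab => exact EqvGen.rel _ _ (knuthCtx hab w x)
  | refl a => exact EqvGen.refl _
  | symm a b _ ih => exact EqvGen.symm _ _ ih
  | trans a b c _ _ ih1 ih2 => exact EqvGen.trans _ _ _ ih1 ih2

/-- move a trailing 0 left through ones -/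
lemma moveS1 (j : ℕ) (u : List (Fin 2)) :
    Plactic (u ++ replicate (j + 1) 1 ++ [0]) (u ++ 1 :: 0 :: replicate j 1) := by
  induction j generalizing u with
  | zero =>
    have he : u ++ replicate (0 + 1) (1 : Fin 2) ++ [0] = u ++ 1 :: 0 :: replicate 0 1 := by
      simp
    rw [he]
    exact EqvGen.refl _
  | succ j ih =>
    apply EqvGen.trans _ (u ++ 1 :: 1 :: 0 :: replicate j 1) _
    · have := ih (u ++ [1])
      have he : u ++ [1] ++ replicate (j + 1) 1 ++ [0]
          = u ++ replicate (j + 1 + 1) 1 ++ [0] := by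
        simp [replicate_succ, List.append_assoc]
      have he2 : u ++ [1] ++ 1 :: 0 :: replicate j 1
          = u ++ 1 :: 1 :: 0 :: replicate j 1 := by
        simp [List.append_assoc]
      rw [he, he2] at this
      exact this
    · have hstep := KnuthStep.k1 u (replicate j 1) (0 : Fin 2) 1 1
        (by decide) (by decide)
      have h1 : u ++ [1, 0, 1] ++ replicate j 1 = u ++ 1 :: 0 :: replicate (j + 1) 1 := by
        simp [replicate_succ]
      have h2 : u ++ [1, 1, 0] ++ replicate j 1 = u ++ 1 :: 1 :: 0 :: replicate j 1 := by
        simp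
      exact EqvGen.symm _ _ (by rw [← h1, ← h2]; exact EqvGen.rel _ _ hstep)

/-- move a 1 (followed by a 0) left through zeros -/
lemma moveS2 (i : ℕ) (v : List (Fin 2)) :
    Plactic (replicate i 0 ++ 1 :: 0 :: v) (1 :: replicate (i + 1) 0 ++ v) := by
  induction i generalizing v with
  | zero => exact EqvGen.refl _
  | succ i ih =>
    apply EqvGen.trans _ ((0 : Fin 2) :: 1 :: replicate (i + 1) 0 ++ v) _
    · have := placticCtx (ih v) [0] []
      have he : [(0 : Fin 2)] ++ (replicate i 0 ++ 1 :: 0 :: v) ++ []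
          = replicate (i + 1) 0 ++ 1 :: 0 :: v := by
        simp [replicate_succ]
      have he2 : [(0 : Fin 2)] ++ (1 :: replicate (i + 1) 0 ++ v) ++ []
          = 0 :: 1 :: replicate (i + 1) 0 ++ v := by
        simp
      rw [he, he2] at this
      exact this
    · have hstep := KnuthStep.k2 ([] : List (Fin 2)) (replicate i 0 ++ v) (0 : Fin 2) 0 1
        (by decide) (by decide)
      have h1 : ([] : List (Fin 2)) ++ [0, 1, 0] ++ (replicate i 0 ++ v)
          = 0 :: 1 :: replicate (i + 1) 0 ++ v := by
        simp [replicate_succ]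
      have h2 : ([] : List (Fin 2)) ++ [1, 0, 0] ++ (replicate i 0 ++ v)
          = 1 :: replicate (i + 1 + 1) 0 ++ v := by
        simp [replicate_succ]
      rw [← h1, ← h2]
      exact EqvGen.rel _ _ hstep

lemma keyMove (i j : ℕ) :
    Plactic (replicate i (0 : Fin 2) ++ replicate (j + 1) 1 ++ [0])
      (1 :: replicate (i + 1) 0 ++ replicate j 1) := by
  exact ptrans (moveS1 j (replicate i 0)) (moveS2 i (replicate j (1 : Fin 2)))

lemma toNF (w : List (Fin 2)) : ∃ k i j, k ≤ i ∧ Plactic w (NF k i j) := by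
  induction w using List.reverseRecOn with
  | nil => exact ⟨0, 0, 0, le_refl 0, EqvGen.refl _⟩
  | append_singleton w x ih =>
    obtain ⟨k, i, j, hki, hp⟩ := ih
    have hctx : Plactic (w ++ [x]) (NF k i j ++ [x]) := by
      have := placticCtx hp [] [x]
      simpa using this
    rcases fin2 x with rfl | rfl
    · -- x = 0
      cases j with
      | zero =>
        refine ⟨k, i + 1, 0, by omega, ?_⟩
        have he : NF k i 0 ++ [(0 : Fin 2)] = NF k (i + 1) 0 := by
          simp [NF, replicate_succ']
        rwa [he] at hctx
      | succ j =>
        refine ⟨k + 1, i + 1, j, by omega, ptrans hctx ?_⟩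
        have h1 : NF k i (j + 1) ++ [(0 : Fin 2)]
            = replicate k 1 ++ (replicate i 0 ++ replicate (j + 1) 1 ++ [0]) ++ [] := by
          simp [NF, List.append_assoc]
        have h2 : NF (k + 1) (i + 1) j
            = replicate k 1 ++ (1 :: replicate (i + 1) 0 ++ replicate j 1) ++ [] := by
          simp [NF, replicate_succ', List.append_assoc]
        rw [h1, h2]
        exact placticCtx (keyMove i j) (replicate k 1) []
    · -- x = 1
      refine ⟨k, i, j + 1, hki, ?_⟩
      have he : NF k i j ++ [(1 : Fin 2)] = NF k i (j + 1) := by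
        simp [NF, replicate_succ', List.append_assoc]
      rwa [he] at hctx

lemma NF_inj {k i j k' i' j' : ℕ} (hk : k ≤ i) (hk' : k' ≤ i')
    (h : ∀ r : List (Fin 2), Pairwise (· ≤ ·) r →
      rowActW r (NF k i j) = rowActW r (NF k' i' j')) :
    k = k' ∧ i = i' ∧ j = j' := by
  have h0 := h (form 0 0) (form_sorted 0 0)
  have h1 := h (form 0 (i + i')) (form_sorted 0 (i + i'))
  rw [act_NF, act_NF] at h0 h1
  obtain ⟨e1, e2⟩ := form_inj h0
  obtain ⟨e3, e4⟩ := form_inj h1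
  omega

end TwoGram

/-- over a two-letter alphabet, the grammic congruence (equality
of actions on all rows) coincides with the plactic congruence. -/
theorem two_letters_gram_iff_plactic (u v : List (Fin 2)) :
    (∀ r : List (Fin 2), List.Pairwise (· ≤ ·) r → rowActW r u = rowActW r v) ↔
      Plactic u v := by
  constructor
  · intro h
    obtain ⟨k, i, j, hk, hu⟩ := TwoGram.toNF u
    obtain ⟨k', i', j', hk', hv⟩ := TwoGram.toNF v
    have hact : ∀ r : List (Fin 2), List.Pairwise (· ≤ ·) r →
        rowActW r (TwoGram.NF k i j) = rowActW r (TwoGram.NF k' i' j') := by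
      intro r hr
      rw [← TwoGram.plactic_act hu r hr, h r hr, TwoGram.plactic_act hv r hr]
    obtain ⟨rfl, rfl, rfl⟩ := TwoGram.NF_inj hk hk' hact
    exact TwoGram.ptrans hu (Relation.EqvGen.symm _ _ hv)
  · intro h r hr
    exact TwoGram.plactic_act h r hr
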